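/- Let a = 8/27 and C = 9. Then the quartic q(r) = −16C² + 64r + 32Cr − 16r² − 8aCr² + 8ar³ − a²r⁴ has r = 9 as its only real root, and it has multiplicity 2; in particular q(r) ≤ 0 for all real r, with equality only at r = 9. -/

import Mathlib

def q (a C r : ℝ) : ℝ :=
  -16 * C^2 + 64 * r + 32 * C * r - 16 * r^2 - 8 * a * C * r^2 + 8 * a * r^3 - a^2 * r^4

theorem q_nonpositive_special :
    q (8/27) 9 9 = 0 ∧ deriv (q (8/27) 9) 9 = 0 ∧
    (∀ r : ℝ, q (8/27) 9 r ≤ 0) ∧ (∀ r : ℝ, q (8/27) 9 r = 0 → r = 9) := by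
  have hfact : ∀ r : ℝ, q (8/27) 9 r = -((r - 9)^2 * (64 * (r - 9/2)^2 + 10368)) / 729 := by
    intro r; simp only [q]; ring
  refine ⟨by rw [hfact]; ring, ?_, ?_, ?_⟩
  · have hq : q (8/27) 9 = fun r : ℝ =>
        -((r - 9)^2 * (64 * (r - 9/2)^2 + 10368)) / 729 := funext hfact
    rw [hq]
    have h : HasDerivAt (fun r : ℝ => -((r - 9)^2 * (64 * (r - 9/2)^2 + 10368)) / 729)
        (-((2 * (9 - 9)) * (64 * (9 - 9/2)^2 + 10368) + (9 - 9)^2 * (64 * (2 * (9 - 9/2)))) / 729)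
        9 := by
      have h1 : HasDerivAt (fun r : ℝ => (r - 9)^2) (2 * (9 - 9)) 9 := by
        simpa using ((hasDerivAt_id (9:ℝ)).sub_const 9).fun_pow 2
      have h2 : HasDerivAt (fun r : ℝ => 64 * (r - 9/2)^2 + 10368)
          (64 * (2 * (9 - 9/2))) 9 := by
        simpa using (((hasDerivAt_id (9:ℝ)).sub_const (9/2)).fun_pow 2).const_mul 64 |>.add_const 10368
      simpa using ((h1.mul h2).neg).div_const 729
    rw [h.deriv]; norm_num
  · intro r
    rw [hfact]
    nlinarith [sq_nonneg (r - 9), sq_nonneg (r - 9/2), sq_nonneg ((r - 9) * (r - 9/2))]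
  · intro r h
    rw [hfact r] at h
    have h2 : (r - 9)^2 * (64 * (r - 9/2)^2 + 10368) = 0 := by linarith
    have h3 : (64 * (r - 9/2)^2 + 10368) > 0 := by positivity
    have h4 : (r - 9)^2 = 0 := by
      rcases mul_eq_zero.mp h2 with h' | h'
      · exact h'
      · linarith
    have := pow_eq_zero_iff (n := 2) (by norm_num) |>.mp h4
    linarith
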